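/- arXiv:1701.02368 — 3 statements merged into one kernel-verified Lean document; each statement's English description precedes it below -/
import Mathlib

section
/- Suppose real numbers F_best, F_opt, f_best, OPT ≥ 0, constants 0 < δ₁, with δ₂ > (1 - 1/e)·δ₁, and a scaling λ > 0 satisfy: (i) F_best ≥ (1 - 1/e) · F_opt (greedy guarantee), (ii) λ · F_opt ≥ (1 - δ₁) · OPT (lower estimation accuracy), and (iii) λ · F_best - f_best ≤ (δ₂ - (1 - 1/e)·δ₁) · OPT (upper estimation accuracy). Then f_best ≥ (1 - 1/e - δ₂) · OPT. -/
theorem stmt_8 (Fbest Fopt fbest OPT δ₁ δ₂ lam : ℝ)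
    (hFbest : 0 ≤ Fbest) (hFopt : 0 ≤ Fopt) (hfbest : 0 ≤ fbest) (hOPT : 0 ≤ OPT)
    (hδ₁ : 0 < δ₁) (hδ₂ : δ₂ > (1 - 1 / Real.exp 1) * δ₁) (hlam : 0 < lam)
    (hgreedy : Fbest ≥ (1 - 1 / Real.exp 1) * Fopt)
    (hlower : lam * Fopt ≥ (1 - δ₁) * OPT)
    (hupper : lam * Fbest - fbest ≤ (δ₂ - (1 - 1 / Real.exp 1) * δ₁) * OPT) :
    fbest ≥ (1 - 1 / Real.exp 1 - δ₂) * OPT := by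
  have he : (1:ℝ) < Real.exp 1 := by
    have := Real.exp_one_gt_d9; linarith
  have h1 : 0 < 1 - 1 / Real.exp 1 := by
    have : 1 / Real.exp 1 < 1 := by
      rw [div_lt_one (by positivity)]; exact he
    linarith
  nlinarith [mul_le_mul_of_nonneg_left hgreedy (le_of_lt h1),
    mul_le_mul_of_nonneg_left hlower (le_of_lt h1), hlam.le,
    mul_le_mul_of_nonneg_left hgreedy hlam.le]
end

section
/- Let F : Finset V → ℝ be monotone nondecreasing and submodular with F(∅) ≥ 0, over a finite ground set V. Let S' be the set obtained by k steps of greedy selection (at each step adding an element maximizing the marginal gain of F). Then for every S ⊆ V with |S| ≤ k, F(S') ≥ (1 - (1-1/k)^k) · F(S) ≥ (1 - 1/e) · F(S). -/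
lemma sum_marginal_aux {V : Type*} [DecidableEq V]
    (F : Finset V → ℝ)
    (hmono : ∀ S₁ S₂ : Finset V, S₁ ⊆ S₂ → F S₁ ≤ F S₂)
    (hsub : ∀ (S₁ S₂ : Finset V) (v : V), S₁ ⊆ S₂ → v ∉ S₂ →
      F (insert v S₁) - F S₁ ≥ F (insert v S₂) - F S₂)
    (A T : Finset V) :
    F (A ∪ T) - F A ≤ ∑ v ∈ T, (F (insert v A) - F A) := by
  induction T using Finset.induction_on with
  | empty => simp
  | @insert x T' hx ih =>
    rw [Finset.sum_insert hx]
    have h1 : A ∪ insert x T' = insert x (A ∪ T') := by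
      ext y; simp [or_comm, or_left_comm]
    by_cases hxA : x ∈ A ∪ T'
    · have h3 : insert x (A ∪ T') = A ∪ T' := Finset.insert_eq_self.2 hxA
      rw [h1, h3]
      have h2 : 0 ≤ F (insert x A) - F A := by
        have := hmono A (insert x A) (Finset.subset_insert _ _); linarith
      linarith
    · have h2 := hsub A (A ∪ T') x Finset.subset_union_left hxA
      rw [h1]; linarith

theorem stmt_14 {V : Type*} [Fintype V] [DecidableEq V]
    (F : Finset V → ℝ)
    (hmono : ∀ S₁ S₂ : Finset V, S₁ ⊆ S₂ → F S₁ ≤ F S₂)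
    (hsub : ∀ (S₁ S₂ : Finset V) (v : V), S₁ ⊆ S₂ → v ∉ S₂ →
      F (insert v S₁) - F S₁ ≥ F (insert v S₂) - F S₂)
    (h0 : 0 ≤ F ∅)
    (k : ℕ) (hk : 1 ≤ k)
    (Sg : ℕ → Finset V) (hS0 : Sg 0 = ∅)
    (hstep : ∀ j < k, ∃ v : V, Sg (j + 1) = insert v (Sg j) ∧
      ∀ w : V, F (insert w (Sg j)) ≤ F (insert v (Sg j)))
    (S : Finset V) (hcard : S.card ≤ k) :
    F (Sg k) ≥ (1 - (1 - 1 / (k : ℝ)) ^ k) * F S ∧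
      (1 - (1 - 1 / (k : ℝ)) ^ k) * F S ≥ (1 - 1 / Real.exp 1) * F S := by
  have hkpos : (0:ℝ) < k := by exact_mod_cast hk
  set c : ℝ := 1 - 1 / (k:ℝ) with hc
  have hc0 : 0 ≤ c := by
    rw [hc]
    have : 1 / (k:ℝ) ≤ 1 := by
      rw [div_le_one hkpos]; exact_mod_cast hk
    linarith
  have key : ∀ j, j ≤ k → F S - F (Sg j) ≤ c ^ j * F S := by
    intro j
    induction j with
    | zero => intro _; simp [hS0]; linarith
    | succ j ih =>
      intro hjk
      have hj : j < k := Nat.lt_of_succ_le hjk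
      have hle := ih (le_of_lt hj)
      obtain ⟨v, hv, hmax⟩ := hstep j hj
      set Δ : ℝ := F (Sg (j+1)) - F (Sg j) with hΔdef
      have hΔ0 : 0 ≤ Δ := by
        have := hmono (Sg j) (insert v (Sg j)) (Finset.subset_insert _ _)
        rw [hΔdef, hv]; linarith
      -- F S ≤ F (Sg j) + k * Δ
      have hFS : F S ≤ F (Sg j ∪ (S \ Sg j)) := by
        apply hmono
        intro x hx
        by_cases h : x ∈ Sg j <;> simp [h, hx]
      have hsum := sum_marginal_aux F hmono hsub (Sg j) (S \ Sg j)
      have hterm : ∀ w ∈ S \ Sg j, F (insert w (Sg j)) - F (Sg j) ≤ Δ := by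
        intro w _
        have := hmax w
        rw [hΔdef, hv]; linarith
      have hsum2 : ∑ w ∈ S \ Sg j, (F (insert w (Sg j)) - F (Sg j))
          ≤ (S \ Sg j).card • Δ := Finset.sum_le_card_nsmul _ _ _ hterm
      have hcard2 : ((S \ Sg j).card : ℝ) ≤ (k : ℝ) := by
        have : (S \ Sg j).card ≤ S.card := Finset.card_le_card (Finset.sdiff_subset)
        exact_mod_cast le_trans this hcard
      have hsum3 : ((S \ Sg j).card : ℝ) * Δ ≤ (k:ℝ) * Δ :=
        mul_le_mul_of_nonneg_right hcard2 hΔ0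
      have hsum2' : ∑ w ∈ S \ Sg j, (F (insert w (Sg j)) - F (Sg j))
          ≤ ((S \ Sg j).card : ℝ) * Δ := by
        simpa [nsmul_eq_mul] using hsum2
      have hkey : F S - F (Sg j) ≤ (k:ℝ) * Δ := by linarith
      -- recursion
      have hrec : F S - F (Sg (j+1)) ≤ c * (F S - F (Sg j)) := by
        have h1 : (k:ℝ) * (F S - F (Sg (j+1))) ≤ (k:ℝ) * (c * (F S - F (Sg j))) := by
          rw [hc]
          have : (k:ℝ) * ((1 - 1 / (k:ℝ)) * (F S - F (Sg j)))
              = (k:ℝ) * (F S - F (Sg j)) - (F S - F (Sg j)) := by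
            field_simp
          rw [this]
          rw [hΔdef] at hkey
          linarith
        exact le_of_mul_le_mul_left h1 hkpos
      calc F S - F (Sg (j+1)) ≤ c * (F S - F (Sg j)) := hrec
        _ ≤ c * (c ^ j * F S) := mul_le_mul_of_nonneg_left hle hc0
        _ = c ^ (j+1) * F S := by ring
  have hmain := key k le_rfl
  have hFS0 : 0 ≤ F S := le_trans h0 (hmono ∅ S (Finset.empty_subset S))
  constructor
  · have : (1 - c ^ k) * F S = F S - c ^ k * F S := by ring
    rw [this]; linarith
  · -- c ^ k ≤ 1 / exp 1
    have hexp : c ≤ Real.exp (-(1/(k:ℝ))) := by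
      have := Real.add_one_le_exp (-(1/(k:ℝ)))
      rw [hc]; linarith
    have hpow : c ^ k ≤ Real.exp (-(1/(k:ℝ))) ^ k := pow_le_pow_left₀ hc0 hexp k
    have hE : Real.exp (-(1/(k:ℝ))) ^ k = Real.exp (-1) := by
      rw [← Real.exp_nat_mul]
      congr 1
      field_simp
    have hck : c ^ k ≤ 1 / Real.exp 1 := by
      rw [hE, Real.exp_neg] at hpow
      rw [one_div]
      exact hpow
    have : (1 - 1 / Real.exp 1) ≤ 1 - c ^ k := by linarith
    exact mul_le_mul_of_nonneg_right this hFS0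
end

section
/- In a directed graph g (a realization, all edges deterministic) with disjoint seed sets S_r (rumor, higher priority) and S_p (positive), run the synchronous competitive diffusion: at time 0 nodes of S_r are rumor-active and nodes of S_p are positive-active; at each time t, every node activated at t-1 activates each of its currently inactive out-neighbors; a node activated simultaneously by both cascades at the same time step becomes rumor-active. Then a node u becomes rumor-active if and only if dist_g(S_r, u) ≤ dist_g(S_p, u) and dist_g(S_r, u) < ∞, where dist_g(S, u) = min over s ∈ S of the directed shortest-path length from s to u. -/
/-- `reach g n s u`: there is a directed walk of length exactly `n` from `s` to `u`. -/
def reach {V : Type*} (g : V → V → Prop) : ℕ → V → V → Prop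
  | 0, s, u => s = u
  | n + 1, s, u => ∃ w, reach g n s w ∧ g w u

/-- Directed shortest-path distance from the set `S` to the node `u`, valued in `ℕ∞`. -/
noncomputable def edistSet {V : Type*} (g : V → V → Prop) (S : Set V) (u : V) : ℕ∞ :=
  ⨅ (n : ℕ) (_ : ∃ s ∈ S, reach g n s u), (n : ℕ∞)

/-- Synchronous competitive diffusion with rumor priority: at each step every
currently active node activates its inactive out-neighbors, ties won by rumor.
Returns the pair (rumor-active set, positive-active set) at each time. -/
def diffuse {V : Type*} (g : V → V → Prop) (Sr Sp : Set V) : ℕ → Set V × Set V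
  | 0 => (Sr, Sp)
  | t + 1 =>
    let R := (diffuse g Sr Sp t).1
    let P := (diffuse g Sr Sp t).2
    (R ∪ {v | v ∉ R ∪ P ∧ ∃ u ∈ R, g u v},
     P ∪ {v | v ∉ R ∪ P ∧ (∃ u ∈ P, g u v) ∧ ¬∃ u ∈ R, g u v})

section Aux

variable {V : Type*} {g : V → V → Prop} {S : Set V}

lemma edist_le_of_reach {u : V} {n : ℕ} (h : ∃ s ∈ S, reach g n s u) :
    edistSet g S u ≤ n := iInf₂_le n h

lemma edist_le_iff {u : V} {n : ℕ} :
    edistSet g S u ≤ (n : ℕ∞) ↔ ∃ m ≤ n, ∃ s ∈ S, reach g m s u := by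
  constructor
  · intro h
    by_contra hc
    push_neg at hc
    have h1 : ((n + 1 : ℕ) : ℕ∞) ≤ edistSet g S u := by
      refine le_iInf₂ fun m hm => ?_
      obtain ⟨s, hs, hr⟩ := hm
      have : n < m := by
        by_contra hle
        exact hc m (le_of_not_gt hle) s hs hr
      exact_mod_cast this
    have h2 : ((n + 1 : ℕ) : ℕ∞) ≤ (n : ℕ∞) := h1.trans h
    have : n + 1 ≤ n := by exact_mod_cast h2
    omega
  · rintro ⟨m, hmn, h⟩
    exact le_trans (edist_le_of_reach h) (by exact_mod_cast hmn)

lemma edist_succ {w u : V} (hg : g w u) :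
    edistSet g S u ≤ edistSet g S w + 1 := by
  rcases eq_or_ne (edistSet g S w) ⊤ with h | h
  · simp [h]
  · lift edistSet g S w to ℕ using h with k hk
    obtain ⟨m, hm, s, hs, hr⟩ := edist_le_iff.mp hk.ge
    have h3 : edistSet g S u ≤ ((m + 1 : ℕ) : ℕ∞) :=
      edist_le_of_reach ⟨s, hs, ⟨w, hr, hg⟩⟩
    refine h3.trans ?_
    have h2 : m + 1 ≤ k + 1 := Nat.add_le_add_right hm 1
    exact_mod_cast h2

lemma exists_pred {u : V} {t : ℕ} (h : edistSet g S u ≤ ((t + 1 : ℕ) : ℕ∞))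
    (h2 : ¬ edistSet g S u ≤ (t : ℕ∞)) :
    ∃ w, g w u ∧ ∃ s ∈ S, reach g t s w := by
  obtain ⟨m, hm, s, hs, hr⟩ := edist_le_iff.mp h
  have hmt : m = t + 1 := by
    by_contra hne
    have hmt : m ≤ t := by omega
    exact h2 (le_trans (edist_le_of_reach ⟨s, hs, hr⟩) (by exact_mod_cast hmt))
  subst hmt
  obtain ⟨w, hrw, hgw⟩ := hr
  exact ⟨w, hgw, s, hs, hrw⟩

lemma add_one_le_of_lt' {t : ℕ} {x : ℕ∞} (h : (t : ℕ∞) < x) : ((t + 1 : ℕ) : ℕ∞) ≤ x := by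
  rcases eq_or_ne x ⊤ with rfl | hx
  · exact le_top
  · lift x to ℕ using hx with k hk
    have hlt : t < k := by exact_mod_cast h
    have h2 : t + 1 ≤ k := by omega
    exact_mod_cast h2

lemma helper1 {a b : ℕ∞} {t : ℕ} (h1 : ¬(a ≤ b ∧ a ≤ (t : ℕ∞)))
    (h2 : ¬(b < a ∧ b ≤ (t : ℕ∞))) : (t : ℕ∞) < a ∧ (t : ℕ∞) < b := by
  rcases le_or_gt a b with hab | hab
  · have ha : ¬ a ≤ (t : ℕ∞) := fun h => h1 ⟨hab, h⟩
    exact ⟨lt_of_not_ge ha, lt_of_lt_of_le (lt_of_not_ge ha) hab⟩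
  · have hb : ¬ b ≤ (t : ℕ∞) := fun h => h2 ⟨hab, h⟩
    exact ⟨(lt_of_not_ge hb).trans hab, lt_of_not_ge hb⟩

end Aux

section Inv

variable {V : Type*} {g : V → V → Prop} {Sr Sp : Set V}

lemma diffuse_invariant (hdisj : Disjoint Sr Sp) :
    ∀ t u, (u ∈ (diffuse g Sr Sp t).1 ↔
        edistSet g Sr u ≤ edistSet g Sp u ∧ edistSet g Sr u ≤ (t : ℕ∞)) ∧
      (u ∈ (diffuse g Sr Sp t).2 ↔
        edistSet g Sp u < edistSet g Sr u ∧ edistSet g Sp u ≤ (t : ℕ∞)) := by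
  intro t
  induction t with
  | zero =>
    intro u
    constructor
    · simp only [diffuse, Nat.cast_zero]
      constructor
      · intro hu
        have h0 : edistSet g Sr u ≤ (0 : ℕ∞) := by
          exact_mod_cast edist_le_of_reach (S := Sr) ⟨u, hu, show reach g 0 u u from rfl⟩
        exact ⟨h0.trans zero_le, h0⟩
      · rintro ⟨-, h0⟩
        obtain ⟨m, hm, s, hs, hr⟩ := edist_le_iff.mp (by exact_mod_cast h0 :
          edistSet g Sr u ≤ ((0 : ℕ) : ℕ∞))
        obtain rfl : m = 0 := Nat.le_zero.mp hm
        exact hr ▸ hs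
    · simp only [diffuse, Nat.cast_zero]
      constructor
      · intro hu
        have h0 : edistSet g Sp u ≤ (0 : ℕ∞) := by
          exact_mod_cast edist_le_of_reach (S := Sp) ⟨u, hu, show reach g 0 u u from rfl⟩
        have hr : ¬ edistSet g Sr u ≤ (0 : ℕ∞) := by
          intro h
          obtain ⟨m, hm, s, hs, hrr⟩ := edist_le_iff.mp (by exact_mod_cast h :
            edistSet g Sr u ≤ ((0 : ℕ) : ℕ∞))
          obtain rfl : m = 0 := Nat.le_zero.mp hm
          exact Set.disjoint_left.mp hdisj (hrr ▸ hs) hu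
        exact ⟨lt_of_le_of_lt h0 (lt_of_not_ge hr), h0⟩
      · rintro ⟨-, h0⟩
        obtain ⟨m, hm, s, hs, hr⟩ := edist_le_iff.mp (by exact_mod_cast h0 :
          edistSet g Sp u ≤ ((0 : ℕ) : ℕ∞))
        obtain rfl : m = 0 := Nat.le_zero.mp hm
        exact hr ▸ hs
  | succ t ih =>
    intro u
    have hc1 : ((t : ℕ∞)) ≤ ((t + 1 : ℕ) : ℕ∞) := by exact_mod_cast Nat.le_succ t
    have memR : u ∈ (diffuse g Sr Sp (t+1)).1 ↔
        u ∈ (diffuse g Sr Sp t).1 ∨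
          (¬(u ∈ (diffuse g Sr Sp t).1 ∨ u ∈ (diffuse g Sr Sp t).2) ∧
            ∃ w ∈ (diffuse g Sr Sp t).1, g w u) := by
      simp [diffuse, Set.mem_union, Set.mem_setOf_eq]
    have memP : u ∈ (diffuse g Sr Sp (t+1)).2 ↔
        u ∈ (diffuse g Sr Sp t).2 ∨
          (¬(u ∈ (diffuse g Sr Sp t).1 ∨ u ∈ (diffuse g Sr Sp t).2) ∧
            (∃ w ∈ (diffuse g Sr Sp t).2, g w u) ∧
            ¬∃ w ∈ (diffuse g Sr Sp t).1, g w u) := by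
      simp [diffuse, Set.mem_union, Set.mem_setOf_eq]
    constructor
    · rw [memR]
      push_cast
      constructor
      · rintro (hu | ⟨hnot, w, hw, hgwu⟩)
        · obtain ⟨h1, h2⟩ := (ih u).1.mp hu
          exact ⟨h1, h2.trans hc1⟩
        · rw [not_or] at hnot
          obtain ⟨htr, htp⟩ := helper1 (fun h => hnot.1 ((ih u).1.mpr h))
            (fun h => hnot.2 ((ih u).2.mpr h))
          obtain ⟨hw1, hw2⟩ := (ih w).1.mp hw
          have hdu : edistSet g Sr u ≤ ((t + 1 : ℕ) : ℕ∞) := by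
            refine (edist_succ hgwu).trans ?_
            calc edistSet g Sr w + 1 ≤ (t : ℕ∞) + 1 := add_le_add_left hw2 1
            _ = ((t + 1 : ℕ) : ℕ∞) := by push_cast; ring
          exact ⟨hdu.trans (add_one_le_of_lt' htp), by exact_mod_cast hdu⟩
      · rintro ⟨hle, hle1⟩
        by_cases ht : edistSet g Sr u ≤ (t : ℕ∞)
        · exact Or.inl ((ih u).1.mpr ⟨hle, ht⟩)
        · right
          have hle1' : edistSet g Sr u ≤ ((t + 1 : ℕ) : ℕ∞) := by exact_mod_cast hle1
          obtain ⟨w, hgwu, s, hs, hrw⟩ := exists_pred hle1' ht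
          have hdrw : edistSet g Sr w ≤ (t : ℕ∞) := edist_le_of_reach ⟨s, hs, hrw⟩
          have hdp1 : ((t + 1 : ℕ) : ℕ∞) ≤ edistSet g Sp u :=
            le_trans (add_one_le_of_lt' (lt_of_not_ge ht)) hle
          have hdw : edistSet g Sr w ≤ edistSet g Sp w := by
            by_contra hcon
            have h1 : edistSet g Sp w < (t : ℕ∞) := lt_of_lt_of_le (lt_of_not_ge hcon) hdrw
            have h2 : edistSet g Sp u ≤ (t : ℕ∞) := by
              refine (edist_succ hgwu).trans ?_
              have h1t := h1.ne_top
              lift edistSet g Sp w to ℕ using h1t with k hk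
              have hkt : k < t := by exact_mod_cast h1
              have hk1 : k + 1 ≤ t := by omega
              exact_mod_cast hk1
            have := hdp1.trans h2
            have : t + 1 ≤ t := by exact_mod_cast this
            omega
          refine ⟨?_, w, (ih w).1.mpr ⟨hdw, hdrw⟩, hgwu⟩
          rintro (h | h)
          · exact ht ((ih u).1.mp h).2
          · exact absurd hle (not_le_of_gt ((ih u).2.mp h).1)
    · rw [memP]
      push_cast
      constructor
      · rintro (hu | ⟨hnot, ⟨w, hw, hgwu⟩, hnr⟩)
        · obtain ⟨h1, h2⟩ := (ih u).2.mp hu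
          exact ⟨h1, h2.trans hc1⟩
        · rw [not_or] at hnot
          obtain ⟨htr, htp⟩ := helper1 (fun h => hnot.1 ((ih u).1.mpr h))
            (fun h => hnot.2 ((ih u).2.mpr h))
          obtain ⟨hw1, hw2⟩ := (ih w).2.mp hw
          have hdu : edistSet g Sp u ≤ ((t + 1 : ℕ) : ℕ∞) := by
            refine (edist_succ hgwu).trans ?_
            calc edistSet g Sp w + 1 ≤ (t : ℕ∞) + 1 := add_le_add_left hw2 1
            _ = ((t + 1 : ℕ) : ℕ∞) := by push_cast; ring
          have hdr : ¬ edistSet g Sr u ≤ ((t + 1 : ℕ) : ℕ∞) := by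
            intro hcontra
            obtain ⟨w', hgw'u, s, hs, hrw'⟩ := exists_pred hcontra (not_le_of_gt htr)
            have hdrw' : edistSet g Sr w' ≤ (t : ℕ∞) := edist_le_of_reach ⟨s, hs, hrw'⟩
            by_cases hcw : edistSet g Sr w' ≤ edistSet g Sp w'
            · exact hnr ⟨w', (ih w').1.mpr ⟨hcw, hdrw'⟩, hgw'u⟩
            · have h1 : edistSet g Sp w' < (t : ℕ∞) :=
                lt_of_lt_of_le (lt_of_not_ge hcw) hdrw'
              have h2 : edistSet g Sp u ≤ (t : ℕ∞) := by
                refine (edist_succ hgw'u).trans ?_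
                have h1t := h1.ne_top
                lift edistSet g Sp w' to ℕ using h1t with k hk
                have hkt : k < t := by exact_mod_cast h1
                have hk1 : k + 1 ≤ t := by omega
                exact_mod_cast hk1
              exact absurd h2 (not_le_of_gt htp)
          exact ⟨lt_of_le_of_lt hdu (lt_of_not_ge hdr), by exact_mod_cast hdu⟩
      · rintro ⟨hlt, hle1⟩
        by_cases ht : edistSet g Sp u ≤ (t : ℕ∞)
        · exact Or.inl ((ih u).2.mpr ⟨hlt, ht⟩)
        · right
          have hle1' : edistSet g Sp u ≤ ((t + 1 : ℕ) : ℕ∞) := by exact_mod_cast hle1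
          obtain ⟨w, hgwu, s, hs, hrw⟩ := exists_pred hle1' ht
          have hdpw : edistSet g Sp w ≤ (t : ℕ∞) := edist_le_of_reach ⟨s, hs, hrw⟩
          have hdpu : ((t + 1 : ℕ) : ℕ∞) ≤ edistSet g Sp u :=
            add_one_le_of_lt' (lt_of_not_ge ht)
          have hwP : edistSet g Sp w < edistSet g Sr w := by
            by_contra hcon
            have : edistSet g Sr u ≤ ((t + 1 : ℕ) : ℕ∞) := by
              refine (edist_succ hgwu).trans ?_
              calc edistSet g Sr w + 1 ≤ (t : ℕ∞) + 1 :=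
                add_le_add_left ((le_of_not_gt hcon).trans hdpw) 1
              _ = ((t + 1 : ℕ) : ℕ∞) := by push_cast; ring
            exact absurd (this.trans hdpu) (not_le_of_gt hlt)
          refine ⟨?_, ⟨w, (ih w).2.mpr ⟨hwP, hdpw⟩, hgwu⟩, ?_⟩
          · rintro (h | h)
            · exact absurd ((ih u).1.mp h).1 (not_le_of_gt hlt)
            · exact ht ((ih u).2.mp h).2
          · rintro ⟨w', hw', hgw'u⟩
            have hdrw' : edistSet g Sr w' ≤ (t : ℕ∞) := ((ih w').1.mp hw').2
            have : edistSet g Sr u ≤ ((t + 1 : ℕ) : ℕ∞) := by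
              refine (edist_succ hgw'u).trans ?_
              calc edistSet g Sr w' + 1 ≤ (t : ℕ∞) + 1 := add_le_add_left hdrw' 1
              _ = ((t + 1 : ℕ) : ℕ∞) := by push_cast; ring
            exact absurd (this.trans hdpu) (not_le_of_gt hlt)

end Inv

theorem stmt_16 {V : Type*} [Fintype V] (g : V → V → Prop)
    (Sr Sp : Set V) (hdisj : Disjoint Sr Sp) (u : V) :
    (∃ t : ℕ, u ∈ (diffuse g Sr Sp t).1) ↔
      edistSet g Sr u ≤ edistSet g Sp u ∧ edistSet g Sr u ≠ ⊤ := by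
  constructor
  · rintro ⟨t, hu⟩
    obtain ⟨h1, h2⟩ := (diffuse_invariant hdisj t u).1.mp hu
    exact ⟨h1, (h2.trans_lt (WithTop.coe_lt_top t)).ne⟩
  · rintro ⟨h1, h2⟩
    lift edistSet g Sr u to ℕ using h2 with n hn
    exact ⟨n, (diffuse_invariant hdisj n u).1.mpr ⟨hn ▸ h1, hn.ge⟩⟩
end
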